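/- Let R be a commutative ring, ∂ the Demazure operator on R[x,y] with ∂(f) = (f - s(f))/(x - y), and let X denote the operator of multiplication by x and Y multiplication by y. Then as operators on R[x,y]: ∂ ∘ X - Y ∘ ∂ = id and X ∘ ∂ - ∂ ∘ Y = id. -/
import Mathlib

open MvPolynomial

lemma demazure_cancel (R : Type*) [CommRing R] :
    IsRegular ((X 0 - X 1 : MvPolynomial (Fin 2) R)) := by
  have h : IsRegular ((finSuccEquiv R 1) (X 0 - X 1)) := by
    have : (finSuccEquiv R 1) (X 0 - X 1 : MvPolynomial (Fin 2) R)
        = Polynomial.X - Polynomial.C (X 0) := by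
      rw [map_sub, finSuccEquiv_X_zero, show (1:Fin 2) = Fin.succ 0 from rfl,
        finSuccEquiv_X_succ]
    rw [this]
    exact (Polynomial.monic_X_sub_C _).isRegular
  constructor
  · intro a b hab
    apply (finSuccEquiv R 1).injective
    apply h.left
    simpa [map_mul] using congrArg (finSuccEquiv R 1) hab
  · intro a b hab
    apply (finSuccEquiv R 1).injective
    apply h.right
    simpa [map_mul] using congrArg (finSuccEquiv R 1) hab

/-- The Demazure operator `∂` on `R[x,y]` (characterized by
`∂(f) * (x - y) = f - s(f)`, `s` swapping `x` and `y`) satisfies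
`∂ ∘ X - Y ∘ ∂ = id` and `X ∘ ∂ - ∂ ∘ Y = id`, where `X`, `Y` denote
multiplication by `x` and `y` respectively. -/
theorem demazure_dot_relations (R : Type*) [CommRing R]
    (D : MvPolynomial (Fin 2) R → MvPolynomial (Fin 2) R)
    (hD : ∀ f : MvPolynomial (Fin 2) R,
      D f * (X 0 - X 1) = f - rename (Equiv.swap (0 : Fin 2) 1) f) :
    (∀ f : MvPolynomial (Fin 2) R, D (X 0 * f) - X 1 * D f = f) ∧
    (∀ f : MvPolynomial (Fin 2) R, X 0 * D f - D (X 1 * f) = f) := by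
  have hs : ∀ f, rename (Equiv.swap (0 : Fin 2) 1) (X 0 * f)
      = (X 1 : MvPolynomial (Fin 2) R) * rename (Equiv.swap (0 : Fin 2) 1) f := by
    intro f; rw [map_mul, rename_X]; simp
  have hs' : ∀ f, rename (Equiv.swap (0 : Fin 2) 1) (X 1 * f)
      = (X 0 : MvPolynomial (Fin 2) R) * rename (Equiv.swap (0 : Fin 2) 1) f := by
    intro f; rw [map_mul, rename_X]; simp
  constructor
  · intro f
    apply (demazure_cancel R).right
    show (D (X 0 * f) - X 1 * D f) * (X 0 - X 1) = f * (X 0 - X 1)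
    linear_combination hD (X 0 * f) - X 1 * hD f - hs f
  · intro f
    apply (demazure_cancel R).right
    show (X 0 * D f - D (X 1 * f)) * (X 0 - X 1) = f * (X 0 - X 1)
    linear_combination X 0 * hD f - hD (X 1 * f) + hs' f
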